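/- arXiv:2605.00150 — 2 statements merged into one kernel-verified Lean document; each statement's English description precedes it below -/
import Mathlib

section
/- Let H be a Hilbert space, f = f₁ + f₂ with f₁ = α·1 a multiple of a fixed unit vector, f₂ ⊥ f₁, ‖f‖ = 1, α² + γ² = 1 with γ = ‖f₂‖. Let V ∈ L^∞(T^d), V ≤ 0 with ‖V‖_{L¹} = c₁ > 0, and let P satisfy (Pf, f) ≤ 0 for all f. If γ < 2c₁/(c₁ + 8‖V‖_{L²}) and γ ≤ 1/4, then ((P + m_V) f, f) ≤ −c₁/2, where m_V is multiplication by V and 1 denotes the constant function one on T^d. -/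
open MeasureTheory RealInnerProductSpace

noncomputable section

abbrev Torus (d : ℕ) := Fin d → AddCircle (1 : ℝ)

abbrev L2R (d : ℕ) := Lp ℝ 2 (volume : Measure (Torus d))

set_option maxHeartbeats 1000000 in
/-- Quadratic-form estimate for `f = α·1 + f₂` with small orthogonal component:
if `γ = ‖f₂‖ < 2c₁/(c₁ + 8‖V‖_{L²})` and `γ ≤ 1/4`, then `((P + m_V)f, f) ≤ −c₁/2`. -/
theorem small_orthogonal_component_estimate (d : ℕ)
    (V : Torus d → ℝ) (hV_meas : Measurable V)
    (CV : ℝ) (hV_bd : ∀ x, |V x| ≤ CV)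
    (hV_nonpos : ∀ x, V x ≤ 0)
    (c₁ : ℝ) (hc₁_def : c₁ = ∫ x, |V x|) (hc₁_pos : 0 < c₁)
    (P MV : L2R d →L[ℝ] L2R d)
    (hP : ∀ f : L2R d, ⟪P f, f⟫ ≤ 0)
    (hMV : ∀ u : L2R d, (MV u : Torus d → ℝ) =ᵐ[volume] fun x => V x * u x)
    (one : L2R d) (hone : (one : Torus d → ℝ) =ᵐ[volume] fun _ => 1)
    (f f₁ f₂ : L2R d) (α γ : ℝ)
    (hsplit : f = f₁ + f₂)
    (hf₁ : f₁ = α • one)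
    (hperp : ⟪f₂, one⟫ = 0)
    (hfnorm : ‖f‖ = 1)
    (hγ : γ = ‖f₂‖)
    (hαγ : α ^ 2 + γ ^ 2 = 1)
    (hγ_small : γ < 2 * c₁ / (c₁ + 8 * (eLpNorm V 2 (volume : Measure (Torus d))).toReal))
    (hγ_quarter : γ ≤ 1 / 4) :
    ⟪(P + MV) f, f⟫ ≤ -c₁ / 2 := by
  set μ : Measure (Torus d) := volume with hμ
  set Cν : ℝ := (eLpNorm V 2 μ).toReal with hCν
  have hCν_nonneg : 0 ≤ Cν := ENNReal.toReal_nonneg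
  -- basic integrabilities
  have hVsm : AEStronglyMeasurable V μ := hV_meas.aestronglyMeasurable
  have hVI : Integrable V μ :=
    (integrable_const CV).mono' hVsm (Filter.Eventually.of_forall fun x => by
      simpa using hV_bd x)
  have hV2 : MemLp V 2 μ :=
    MemLp.of_bound hVsm CV (Filter.Eventually.of_forall fun x => by simpa using hV_bd x)
  set g : Torus d → ℝ := (f₂ : Torus d → ℝ) with hg
  have hg2 : MemLp g 2 μ := Lp.memLp f₂
  have hgI : Integrable g μ := hg2.integrable (by norm_num)
  have hVg : Integrable (fun x => V x * g x) μ :=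
    hgI.bdd_mul hVsm (Filter.Eventually.of_forall fun x => by simpa using hV_bd x)
  have hg2I : Integrable (fun x => g x ^ 2) μ := hg2.integrable_sq
  have hVg2 : Integrable (fun x => V x * g x ^ 2) μ :=
    hg2I.bdd_mul hVsm (Filter.Eventually.of_forall fun x => by simpa using hV_bd x)
  -- ∫ V = -c₁
  have hintV : ∫ x, V x ∂μ = -c₁ := by
    rw [hc₁_def]
    rw [← integral_neg]
    refine integral_congr_ae (Filter.Eventually.of_forall fun x => ?_)
    simp [abs_of_nonpos (hV_nonpos x)]
  -- Cauchy-Schwarz : |∫ V g| ≤ Cν γ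
  have hCS : |∫ x, V x * g x ∂μ| ≤ Cν * γ := by
    have h1 : (⟪hV2.toLp V, f₂⟫ : ℝ) = ∫ x, V x * g x ∂μ := by
      rw [L2.inner_def]
      refine integral_congr_ae ?_
      filter_upwards [hV2.coeFn_toLp] with x hx
      simp [hx, RCLike.inner_apply, hg, mul_comm]
    have h2 := abs_real_inner_le_norm (hV2.toLp V) f₂
    rw [h1, Lp.norm_toLp, ← hγ] at h2
    exact h2
  -- ∫ V g² ≤ 0
  have hVg2_nonpos : ∫ x, V x * g x ^ 2 ∂μ ≤ 0 :=
    integral_nonpos fun x => mul_nonpos_of_nonpos_of_nonneg (hV_nonpos x) (sq_nonneg _)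
  -- f =ᵐ α + g
  have hf_ae : (f : Torus d → ℝ) =ᵐ[μ] fun x => α + g x := by
    rw [hsplit, hf₁]
    filter_upwards [Lp.coeFn_add (α • one) f₂, Lp.coeFn_smul α one, hone] with x h1 h2 h3
    simp only [h1, Pi.add_apply, h2, Pi.smul_apply, h3, smul_eq_mul, mul_one, hg]
  -- quadratic form of MV
  have hMVff : ⟪MV f, f⟫ =
      α ^ 2 * ∫ x, V x ∂μ + 2 * α * ∫ x, V x * g x ∂μ + ∫ x, V x * g x ^ 2 ∂μ := by
    rw [L2.inner_def]
    have : ∫ x, (⟪(MV f : Torus d → ℝ) x, (f : Torus d → ℝ) x⟫ : ℝ) ∂μ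
        = ∫ x, (α ^ 2 * V x + 2 * α * (V x * g x) + V x * g x ^ 2) ∂μ := by
      refine integral_congr_ae ?_
      filter_upwards [hMV f, hf_ae] with x h1 h2
      simp only [RCLike.inner_apply, starRingEnd_apply, star_trivial, h1, h2]
      ring
    have h₁ : Integrable (fun x => α ^ 2 * V x) μ := hVI.const_mul _
    have h₂ : Integrable (fun x => 2 * α * (V x * g x)) μ := hVg.const_mul _
    have h₁₂ : Integrable (fun x => α ^ 2 * V x + 2 * α * (V x * g x)) μ := h₁.add h₂
    rw [this, integral_add h₁₂ hVg2, integral_add h₁ h₂, integral_const_mul, integral_const_mul]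
  -- abs α ≤ 1, γ ≥ 0
  have hγ_nonneg : 0 ≤ γ := hγ ▸ norm_nonneg _
  have hα : α ^ 2 ≤ 1 := by nlinarith [sq_nonneg γ]
  -- bound the middle term
  have hmid : 2 * α * ∫ x, V x * g x ∂μ ≤ 2 * Cν * γ := by
    have h1 : |2 * α * ∫ x, V x * g x ∂μ| ≤ 2 * (Cν * γ) := by
      rw [abs_mul, abs_mul]
      have h2 : |α| ≤ 1 := by nlinarith [sq_abs α, abs_nonneg α]
      calc |(2:ℝ)| * |α| * |∫ x, V x * g x ∂μ| ≤ 2 * 1 * (Cν * γ) := by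
            refine mul_le_mul (mul_le_mul (le_of_eq (abs_of_pos two_pos)) h2
              (abs_nonneg _) (by norm_num)) hCS (abs_nonneg _) (by positivity)
        _ = 2 * (Cν * γ) := by ring
    linarith [le_abs_self (2 * α * ∫ x, V x * g x ∂μ)]
  -- divide the hypothesis
  have hD : 0 < c₁ + 8 * Cν := by positivity
  have hkey : γ * (c₁ + 8 * Cν) < 2 * c₁ := by
    have := (lt_div_iff₀ hD).mp (by rwa [hCν] at hγ_small)
    linarith
  have hMVbound : ⟪MV f, f⟫ ≤ -c₁ / 2 := by
    rw [hMVff, hintV]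
    have hq : γ ^ 2 * c₁ ≤ γ * c₁ / 4 := by
      have h : γ * γ ≤ γ * (1 / 4) := mul_le_mul_of_nonneg_left hγ_quarter hγ_nonneg
      nlinarith [h, hc₁_pos]
    have hα2 : α ^ 2 = 1 - γ ^ 2 := by linarith
    have he : α ^ 2 * (-c₁) = -c₁ + γ ^ 2 * c₁ := by rw [hα2]; ring
    linarith [hVg2_nonpos, hmid]
  have := hP f
  have hsum : ⟪(P + MV) f, f⟫ = ⟪P f, f⟫ + ⟪MV f, f⟫ := by
    simp [inner_add_left]
  linarith [hsum ▸ add_le_add this hMVbound]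
end
end

section
/- Let L = P + m_V on L²(T^d), where P = A − I with A convolution by a symmetric probability density ã ∈ L¹(T^d) (ã(−z) = ã(z), ∫ã = 1), and V ∈ L^∞(T^d), V ≤ 0, V < 0 on a set of positive measure. Suppose (Pg,g) ≤ −c₂‖g‖² for all g ⊥ 1, with 0 < c₂ ≤ 1. Then for every f ∈ L²(T^d), (Lf, f) ≤ −κ ‖f‖², where κ = min{c₂ γ₀², c₁/2}, c₁ = ‖V‖_{L¹}, and γ₀ = (2/9)·c₁/‖V‖_{L²}. -/
open MeasureTheory RealInnerProductSpace

noncomputable section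

instance : IsProbabilityMeasure (volume : Measure (AddCircle (1:ℝ))) :=
  ⟨by rw [AddCircle.measure_univ]; norm_num⟩

instance (d : ℕ) : (volume : Measure (Torus d)).IsNegInvariant :=
  MeasureTheory.Measure.pi.isNegInvariant _

lemma aux_prod_integrable (d : ℕ) (a : Torus d → ℝ) (ha_meas : Measurable a)
    (ha_nonneg : ∀ z, 0 ≤ a z)
    (ha_int : Integrable a (volume : Measure (Torus d)))
    (ha_mass : ∫ z, a z = 1) (u : L2R d) :
    Integrable (fun p : Torus d × Torus d => a (p.1 - p.2) * (u : Torus d → ℝ) p.2)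
      ((volume : Measure (Torus d)).prod volume) := by
  have hsm : AEStronglyMeasurable
      (fun p : Torus d × Torus d => a (p.1 - p.2) * (u : Torus d → ℝ) p.2)
      ((volume : Measure (Torus d)).prod volume) := by
    exact ((ha_meas.comp (measurable_fst.sub measurable_snd)).aestronglyMeasurable).mul
      ((Lp.aestronglyMeasurable u).comp_snd)
  rw [integrable_prod_iff' hsm]
  constructor
  · refine Filter.Eventually.of_forall fun y => ?_
    exact (ha_int.comp_sub_right y).mul_const ((u : Torus d → ℝ) y)
  · have heq : (fun y => ∫ x, ‖a (x - y) * (u : Torus d → ℝ) y‖)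
        = fun y => |(u : Torus d → ℝ) y| := by
      funext y
      simp_rw [norm_mul, Real.norm_eq_abs, abs_of_nonneg (ha_nonneg _)]
      rw [integral_mul_const, integral_sub_right_eq_self a y, ha_mass, one_mul]
    rw [heq]
    exact ((Lp.memLp u).integrable one_le_two).abs

lemma aux_swap (d : ℕ) (a : Torus d → ℝ) (ha_meas : Measurable a)
    (ha_nonneg : ∀ z, 0 ≤ a z)
    (ha_int : Integrable a (volume : Measure (Torus d)))
    (ha_mass : ∫ z, a z = 1) (u : L2R d) :
    ∫ x, (∫ y, a (x - y) * (u : Torus d → ℝ) y) = ∫ x, (u : Torus d → ℝ) x := by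
  rw [integral_integral_swap (aux_prod_integrable d a ha_meas ha_nonneg ha_int ha_mass u)]
  have : ∀ y : Torus d, (∫ x, a (x - y) * (u : Torus d → ℝ) y) = (u : Torus d → ℝ) y := by
    intro y
    rw [integral_mul_const, integral_sub_right_eq_self a y, ha_mass, one_mul]
  simp_rw [this]

set_option maxHeartbeats 1000000 in
/-- Spectral gap for `L = P + m_V` with `P = A − I`, `A` convolution by a symmetric
probability density, and `V ≤ 0` negative on a set of positive measure: for every `f`,
`(Lf, f) ≤ −κ‖f‖²` with `κ = min{c₂γ₀², c₁/2}`, `c₁ = ‖V‖_{L¹}`,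
`γ₀ = (2/9)c₁/‖V‖_{L²}`. -/
theorem quadratic_form_gap (d : ℕ)
    (a : Torus d → ℝ)
    (ha_meas : Measurable a) (ha_nonneg : ∀ z, 0 ≤ a z)
    (ha_int : Integrable a (volume : Measure (Torus d)))
    (ha_mass : ∫ z, a z = 1)
    (ha_symm : ∀ z, a (-z) = a z)
    (V : Torus d → ℝ) (hV_meas : Measurable V)
    (CV : ℝ) (hV_bd : ∀ x, |V x| ≤ CV)
    (hV_nonpos : ∀ x, V x ≤ 0)
    (hV_neg : 0 < volume {x : Torus d | V x < 0})
    (one : L2R d) (hone : (one : Torus d → ℝ) =ᵐ[volume] fun _ => 1)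
    (P MV : L2R d →L[ℝ] L2R d)
    (hP : ∀ u : L2R d, (P u : Torus d → ℝ) =ᵐ[volume]
      fun x => (∫ y, a (x - y) * u y) - u x)
    (hMV : ∀ u : L2R d, (MV u : Torus d → ℝ) =ᵐ[volume] fun x => V x * u x)
    (c₂ : ℝ) (hc₂ : 0 < c₂) (hc₂' : c₂ ≤ 1)
    (hgap : ∀ g : L2R d, ⟪g, one⟫ = 0 → ⟪P g, g⟫ ≤ -c₂ * ‖g‖ ^ 2)
    (c₁ γ₀ κ : ℝ)
    (hc₁_def : c₁ = ∫ x, |V x|)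
    (hγ₀_def : γ₀ = (2 / 9) * c₁ / (eLpNorm V 2 (volume : Measure (Torus d))).toReal)
    (hκ_def : κ = min (c₂ * γ₀ ^ 2) (c₁ / 2)) :
    ∀ f : L2R d, ⟪(P + MV) f, f⟫ ≤ -κ * ‖f‖ ^ 2 := by
  -- inner product as integral
  have h_inner : ∀ u v : L2R d, ⟪u, v⟫ = ∫ x, (u : Torus d → ℝ) x * v x := by
    intro u v
    rw [MeasureTheory.L2.inner_def]
    simp [RCLike.inner_apply]
    exact integral_congr_ae (Filter.Eventually.of_forall fun x => mul_comm _ _)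
  -- V is in L²
  have hV2 : MemLp V 2 (volume : Measure (Torus d)) :=
    MemLp.of_bound hV_meas.aestronglyMeasurable CV
      (Filter.Eventually.of_forall fun x => by simpa [Real.norm_eq_abs] using hV_bd x)
  have hVint : Integrable V (volume : Measure (Torus d)) := hV2.integrable one_le_two
  set W : L2R d := hV2.toLp V with hW_def
  have hW_norm : ‖W‖ = (eLpNorm V 2 (volume : Measure (Torus d))).toReal :=
    Lp.norm_toLp V hV2
  -- norm of one
  have hone1 : ⟪one, one⟫ = (1 : ℝ) := by
    rw [h_inner]
    have : (fun x => (one : Torus d → ℝ) x * one x) =ᵐ[volume] fun _ => (1 : ℝ) := by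
      filter_upwards [hone] with x hx; rw [hx]; norm_num
    rw [integral_congr_ae this]
    simp
  have hone_norm : ‖one‖ = 1 := by
    have h := real_inner_self_eq_norm_sq one
    rw [hone1] at h
    nlinarith [norm_nonneg one]
  -- c₁ positive
  have hc₁_pos : 0 < c₁ := by
    rw [hc₁_def]
    rw [integral_pos_iff_support_of_nonneg (fun x => abs_nonneg (V x)) hVint.abs]
    refine lt_of_lt_of_le hV_neg (measure_mono ?_)
    intro x hx
    simp only [Set.mem_setOf_eq] at hx
    simp only [Function.mem_support]
    intro h
    rw [abs_eq_zero] at h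
    exact absurd h (by linarith)
  -- ∫ V = -c₁
  have hintV : ∫ x, V x = -c₁ := by
    rw [hc₁_def]
    have : ∀ x, |V x| = -V x := fun x => abs_of_nonpos (hV_nonpos x)
    simp_rw [this, integral_neg]
    ring
  -- ⟪W, one⟫ = ∫ V
  have hWone : ⟪W, one⟫ = ∫ x, V x := by
    rw [h_inner]
    apply integral_congr_ae
    filter_upwards [hV2.coeFn_toLp, hone] with x h1 h2
    rw [h1, h2, mul_one]
  have hc₁_le_s : c₁ ≤ ‖W‖ := by
    have h := abs_real_inner_le_norm W one
    rw [hWone, hintV, hone_norm, mul_one, abs_neg, abs_of_pos hc₁_pos] at h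
    exact h
  have hs_pos : 0 < ‖W‖ := lt_of_lt_of_le hc₁_pos hc₁_le_s
  have hγs : γ₀ * ‖W‖ = (2 / 9) * c₁ := by
    rw [hγ₀_def, ← hW_norm]
    field_simp
  have hγ₀_nonneg : 0 ≤ γ₀ := by
    rw [hγ₀_def, ← hW_norm]
    positivity
  have hγ₀_le : γ₀ ≤ 2 / 9 := by nlinarith
  have hW_ae : (W : Torus d → ℝ) =ᵐ[volume] V := hV2.coeFn_toLp
  clear_value W
  -- P one = 0
  have hPone : P one = 0 := by
    rw [Lp.eq_zero_iff_ae_eq_zero]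
    have h2 : ∀ x : Torus d, (∫ y, a (x - y) * (one : Torus d → ℝ) y) = 1 := by
      intro x
      have : (fun y => a (x - y) * (one : Torus d → ℝ) y) =ᵐ[volume]
          fun y => a (x - y) := by
        filter_upwards [hone] with y hy; rw [hy, mul_one]
      rw [integral_congr_ae this, integral_sub_left_eq_self a volume x, ha_mass]
    filter_upwards [hP one, hone] with x hx h1
    rw [hx]
    simp [h2 x, h1]
  -- ⟪P u, one⟫ = 0 for all u
  have hPint : ∀ u : L2R d, ⟪P u, one⟫ = 0 := by
    intro u
    rw [h_inner]
    have h1 : (fun x => (P u : Torus d → ℝ) x * (one : Torus d → ℝ) x) =ᵐ[volume]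
        fun x => (∫ y, a (x - y) * (u : Torus d → ℝ) y) - u x := by
      filter_upwards [hP u, hone] with x hx hy
      rw [hy, mul_one, hx]
    rw [integral_congr_ae h1]
    have hu_int : Integrable ((u : Torus d → ℝ)) volume := (Lp.memLp u).integrable one_le_two
    have hconv_int : Integrable (fun x => ∫ y, a (x - y) * (u : Torus d → ℝ) y) volume := by
      have hPu_int : Integrable ((P u : Torus d → ℝ)) volume :=
        (Lp.memLp (P u)).integrable one_le_two
      refine (hPu_int.add hu_int).congr ?_
      filter_upwards [hP u] with x hx
      simp only [Pi.add_apply]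
      rw [hx]; ring
    rw [integral_sub hconv_int hu_int,
      aux_swap d a ha_meas ha_nonneg ha_int ha_mass u, sub_self]
  intro f
  set α : ℝ := ⟪f, one⟫ with hα
  set f₂ : L2R d := f - α • one with hf₂_def
  have hperp : ⟪f₂, one⟫ = 0 := by
    rw [hf₂_def, inner_sub_left, real_inner_smul_left, hone1]
    ring
  have hsum : f = α • one + f₂ := by rw [hf₂_def]; abel
  have hpyth : ‖f‖ ^ 2 = α ^ 2 + ‖f₂‖ ^ 2 := by
    have h := norm_add_sq_real (α • one) f₂
    rw [← hsum] at h
    have hz : ⟪α • one, f₂⟫ = 0 := by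
      rw [real_inner_smul_left, real_inner_comm, hperp, mul_zero]
    rw [h, hz, norm_smul, hone_norm]
    simp [sq_abs]
  clear_value α f₂
  -- P quadratic form
  have hPff : ⟪P f, f⟫ = ⟪P f₂, f₂⟫ := by
    have hPf : P f = P f₂ := by
      rw [hsum, map_add, _root_.map_smul, hPone, smul_zero, zero_add]
    rw [hPf]
    conv_lhs => rw [hsum]
    rw [inner_add_right, real_inner_smul_right, hPint f₂, mul_zero, zero_add]
  have hPbound : ⟪P f, f⟫ ≤ -c₂ * ‖f₂‖ ^ 2 := hPff ▸ hgap f₂ hperp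
  -- MV quadratic form
  have hMVff : ⟪MV f, f⟫ = ∫ x, V x * ((f : Torus d → ℝ) x * f x) := by
    rw [h_inner]
    apply integral_congr_ae
    filter_upwards [hMV f] with x hx
    rw [hx]; ring
  have hsplit : ⟪(P + MV) f, f⟫ = ⟪P f, f⟫ + ⟪MV f, f⟫ := by
    rw [ContinuousLinearMap.add_apply, inner_add_left]
  rcases le_or_gt (γ₀ * ‖f‖) ‖f₂‖ with hcase | hcase
  · -- case 1: big orthogonal part
    have hMV_nonpos : ⟪MV f, f⟫ ≤ 0 := by
      rw [hMVff]
      apply integral_nonpos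
      intro x
      exact mul_nonpos_of_nonpos_of_nonneg (hV_nonpos x) (mul_self_nonneg _)
    have hκ1 : κ ≤ c₂ * γ₀ ^ 2 := hκ_def ▸ min_le_left _ _
    have hsq : (γ₀ * ‖f‖) ^ 2 ≤ ‖f₂‖ ^ 2 :=
      pow_le_pow_left₀ (mul_nonneg hγ₀_nonneg (norm_nonneg f)) hcase 2
    have h1 : c₂ * (γ₀ * ‖f‖) ^ 2 ≤ c₂ * ‖f₂‖ ^ 2 := mul_le_mul_of_nonneg_left hsq hc₂.le
    have h2 : κ * ‖f‖ ^ 2 ≤ (c₂ * γ₀ ^ 2) * ‖f‖ ^ 2 :=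
      mul_le_mul_of_nonneg_right hκ1 (sq_nonneg _)
    have h3 : (γ₀ * ‖f‖) ^ 2 = γ₀ ^ 2 * ‖f‖ ^ 2 := by ring
    linarith
  · -- case 2: small orthogonal part
    have hf_ae : (f : Torus d → ℝ) =ᵐ[volume] fun x => α + (f₂ : Torus d → ℝ) x := by
      have h0 : (f : Torus d → ℝ) =ᵐ[volume] ((α • one + f₂ : L2R d) : Torus d → ℝ) := by
        rw [← hsum]
      filter_upwards [h0, Lp.coeFn_add (α • one) f₂, Lp.coeFn_smul α one, hone]
        with x h1 h2 h3 h4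
      rw [h1, h2]
      simp only [Pi.add_apply]
      rw [h3]
      simp only [Pi.smul_apply, smul_eq_mul, h4, mul_one]
    -- integrability
    have hff_int : Integrable (fun x => (f : Torus d → ℝ) x * f x) volume := by
      have := MeasureTheory.L2.integrable_inner (𝕜 := ℝ) f f
      simpa [RCLike.inner_apply, pow_two] using this
    have hVff_int : Integrable (fun x => V x * ((f : Torus d → ℝ) x * f x)) volume :=
      hff_int.bdd_mul hV_meas.aestronglyMeasurable
        (Filter.Eventually.of_forall fun x => by simpa [Real.norm_eq_abs] using hV_bd x)
    have hVf₂_int : Integrable (fun x => V x * (f₂ : Torus d → ℝ) x) volume :=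
      ((Lp.memLp f₂).integrable one_le_two).bdd_mul hV_meas.aestronglyMeasurable
        (Filter.Eventually.of_forall fun x => by simpa [Real.norm_eq_abs] using hV_bd x)
    have hrhs_int : Integrable
        (fun x => α ^ 2 * V x + 2 * α * (V x * (f₂ : Torus d → ℝ) x)) volume :=
      (hVint.const_mul _).add (hVf₂_int.const_mul _)
    have hptwise : ∀ᵐ x ∂(volume : Measure (Torus d)),
        V x * ((f : Torus d → ℝ) x * f x)
          ≤ α ^ 2 * V x + 2 * α * (V x * (f₂ : Torus d → ℝ) x) := by
      filter_upwards [hf_ae] with x hx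
      rw [hx]
      have h1 : V x * ((f₂ : Torus d → ℝ) x * f₂ x) ≤ 0 :=
        mul_nonpos_of_nonpos_of_nonneg (hV_nonpos x) (mul_self_nonneg _)
      nlinarith [h1]
    have hMVbd : ⟪MV f, f⟫ ≤ α ^ 2 * (∫ x, V x)
        + 2 * α * (∫ x, V x * (f₂ : Torus d → ℝ) x) := by
      rw [hMVff]
      calc ∫ x, V x * ((f : Torus d → ℝ) x * f x)
          ≤ ∫ x, (α ^ 2 * V x + 2 * α * (V x * (f₂ : Torus d → ℝ) x)) :=
            integral_mono_ae hVff_int hrhs_int hptwise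
        _ = α ^ 2 * (∫ x, V x) + 2 * α * (∫ x, V x * (f₂ : Torus d → ℝ) x) := by
            rw [integral_add (hVint.const_mul _) (hVf₂_int.const_mul _),
              integral_const_mul, integral_const_mul]
    have hcross : ∫ x, V x * (f₂ : Torus d → ℝ) x = ⟪W, f₂⟫ := by
      rw [h_inner]
      apply integral_congr_ae
      filter_upwards [hW_ae] with x h1
      rw [h1]
    have hcross_bd : 2 * α * (∫ x, V x * (f₂ : Torus d → ℝ) x)
        ≤ 2 * |α| * (‖W‖ * ‖f₂‖) := by
      rw [hcross]
      calc 2 * α * ⟪W, f₂⟫ ≤ |2 * α * ⟪W, f₂⟫| := le_abs_self _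
        _ = 2 * |α| * |⟪W, f₂⟫| := by rw [abs_mul, abs_mul]; norm_num
        _ ≤ 2 * |α| * (‖W‖ * ‖f₂‖) := by
            apply mul_le_mul_of_nonneg_left (abs_real_inner_le_norm W f₂)
            positivity
    -- numeric conclusion
    have hA : |α| ≤ ‖f‖ := by
      have hsq : |α| ^ 2 ≤ ‖f‖ ^ 2 := by rw [sq_abs]; nlinarith [sq_nonneg ‖f₂‖]
      exact (pow_le_pow_iff_left₀ (abs_nonneg α) (norm_nonneg f) two_ne_zero).1 hsq
    have hsβ : ‖W‖ * ‖f₂‖ ≤ (2 / 9) * c₁ * ‖f‖ := by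
      calc ‖W‖ * ‖f₂‖ ≤ ‖W‖ * (γ₀ * ‖f‖) := by
            exact mul_le_mul_of_nonneg_left hcase.le (norm_nonneg W)
        _ = (γ₀ * ‖W‖) * ‖f‖ := by ring
        _ = (2 / 9) * c₁ * ‖f‖ := by rw [hγs]
    have hterm : 2 * |α| * (‖W‖ * ‖f₂‖) ≤ (4 / 9) * c₁ * ‖f‖ ^ 2 := by
      have h := mul_le_mul hA hsβ (mul_nonneg (norm_nonneg W) (norm_nonneg f₂)) (norm_nonneg f)
      calc 2 * |α| * (‖W‖ * ‖f₂‖) = 2 * (|α| * (‖W‖ * ‖f₂‖)) := by ring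
        _ ≤ 2 * (‖f‖ * ((2 / 9) * c₁ * ‖f‖)) := by linarith
        _ = (4 / 9) * c₁ * ‖f‖ ^ 2 := by ring
    have hβ2 : ‖f₂‖ ^ 2 ≤ γ₀ ^ 2 * ‖f‖ ^ 2 := by
      calc ‖f₂‖ ^ 2 ≤ (γ₀ * ‖f‖) ^ 2 := pow_le_pow_left₀ (norm_nonneg f₂) hcase.le 2
        _ = γ₀ ^ 2 * ‖f‖ ^ 2 := by ring
    have hγ2 : γ₀ ^ 2 ≤ 4 / 81 := by
      calc γ₀ ^ 2 ≤ (2 / 9) ^ 2 := pow_le_pow_left₀ hγ₀_nonneg hγ₀_le 2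
        _ ≤ 4 / 81 := by norm_num
    have hκ2 : κ ≤ c₁ / 2 := hκ_def ▸ min_le_right _ _
    have hPneg : ⟪P f, f⟫ ≤ 0 :=
      le_trans hPbound (mul_nonpos_of_nonpos_of_nonneg (by linarith) (sq_nonneg _))
    rw [hsplit]
    have hMVfinal : ⟪MV f, f⟫ ≤ -(α ^ 2) * c₁ + (4 / 9) * c₁ * ‖f‖ ^ 2 := by
      rw [hintV] at hMVbd
      linarith
    have hα2 : α ^ 2 = ‖f‖ ^ 2 - ‖f₂‖ ^ 2 := by linarith
    have hfinal : ⟪MV f, f⟫ ≤ -(c₁ / 2) * ‖f‖ ^ 2 := by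
      rw [hα2] at hMVfinal
      have hb : ‖f₂‖ ^ 2 ≤ (4 / 81) * ‖f‖ ^ 2 :=
        le_trans hβ2 (mul_le_mul_of_nonneg_right hγ2 (sq_nonneg _))
      have hcb : c₁ * ‖f₂‖ ^ 2 ≤ c₁ * ((4 / 81) * ‖f‖ ^ 2) :=
        mul_le_mul_of_nonneg_left hb hc₁_pos.le
      nlinarith [sq_nonneg ‖f‖]
    have hk : κ * ‖f‖ ^ 2 ≤ (c₁ / 2) * ‖f‖ ^ 2 := mul_le_mul_of_nonneg_right hκ2 (sq_nonneg _)
    linarith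
end
end
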